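/- Let p be a prime, G = C_p ⊕ C_p with independent generators e1, e2, and G1 = {e1, e2, -e1 + e2}. Then the set of minimal zero-sum sequences over G1 equals { e1^j (-e1+e2)^j e2^{p-j} : j ∈ [1, p-1] } ∪ { e1^p, e2^p, (-e1+e2)^p }, and consequently the set of cross numbers of minimal zero-sum sequences over G1 is { j/p : j ∈ [p, 2p-1] }. -/

import Mathlib

open Multiset

section Defs

variable {G : Type*} [AddCommGroup G]

/-- `S` is a zero-sum sequence over `G0`. -/
def IsZeroSumSeq (G0 : Set G) (S : Multiset G) : Prop :=
  (∀ g ∈ S, g ∈ G0) ∧ S.sum = 0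

/-- `S` is a minimal zero-sum sequence over `G0`. -/
def IsMinZeroSum (G0 : Set G) (S : Multiset G) : Prop :=
  S ≠ 0 ∧ IsZeroSumSeq G0 S ∧
    ∀ T : Multiset G, T ≤ S → T ≠ 0 → T ≠ S → T.sum ≠ 0

/-- The set of lengths of factorizations of `B` into minimal zero-sum sequences over `G0`. -/
def LengthSet (G0 : Set G) (B : Multiset G) : Set ℕ :=
  { k | ∃ F : Multiset (Multiset G), F.card = k ∧ (∀ A ∈ F, IsMinZeroSum G0 A) ∧ F.sum = B }

/-- The set of successive distances of a set of naturals. -/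
def DeltaOf (L : Set ℕ) : Set ℕ :=
  { d | ∃ a ∈ L, ∃ b ∈ L, a < b ∧ b - a = d ∧ ∀ c ∈ L, ¬(a < c ∧ c < b) }

/-- The set of distances of the monoid of zero-sum sequences over `G0`. -/
def DeltaB (G0 : Set G) : Set ℕ :=
  ⋃ B ∈ { B : Multiset G | IsZeroSumSeq G0 B }, DeltaOf (LengthSet G0 B)

/-- Minimal distance, with the convention `min ∅ = 0`. -/
noncomputable def minDelta (G0 : Set G) : ℕ := sInf (DeltaB G0)

/-- Cross number of a sequence. -/
noncomputable def crossNum (S : Multiset G) : ℚ :=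
  (S.map fun g => (1 : ℚ) / (addOrderOf g : ℚ)).sum

/-- `G0` is weakly half-factorial. -/
def WeaklyHF (G0 : Set G) : Prop :=
  ∀ A : Multiset G, IsMinZeroSum G0 A → ∃ m : ℕ, crossNum A = (m : ℚ)

/-- `G0` is half-factorial. -/
def HalfFactorial (G0 : Set G) : Prop :=
  ∀ B : Multiset G, IsZeroSumSeq G0 B →
    ∀ k ∈ LengthSet G0 B, ∀ l ∈ LengthSet G0 B, k = l

end Defs

namespace Stmt7Aux

open Multiset

variable (p : ℕ)

def E1 : ZMod p × ZMod p := (1, 0)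
def E2 : ZMod p × ZMod p := (0, 1)
def Gg : ZMod p × ZMod p := (-1, 1)
def G1set : Set (ZMod p × ZMod p) := {E1 p, E2 p, Gg p}
def SS (a b c : ℕ) : Multiset (ZMod p × ZMod p) :=
  replicate a (E1 p) + replicate b (E2 p) + replicate c (Gg p)

variable {p : ℕ}

lemma card_SS (a b c : ℕ) : card (SS p a b c) = a + b + c := by
  simp [SS]

lemma mem_SS {a b c : ℕ} {x : ZMod p × ZMod p} (hx : x ∈ SS p a b c) :
    x ∈ G1set p := by
  simp only [SS, mem_add, mem_replicate] at hx
  rcases hx with (⟨_, h⟩ | ⟨_, h⟩) | ⟨_, h⟩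
  · exact Or.inl h
  · exact Or.inr (Or.inl h)
  · exact Or.inr (Or.inr h)

lemma le_SS {a b c a' b' c' : ℕ} (ha : a' ≤ a) (hb : b' ≤ b) (hc : c' ≤ c) :
    SS p a' b' c' ≤ SS p a b c :=
  add_le_add (add_le_add ((replicate_le_replicate _).mpr ha)
    ((replicate_le_replicate _).mpr hb)) ((replicate_le_replicate _).mpr hc)

lemma sum_SS (a b c : ℕ) :
    (SS p a b c).sum = ((a : ZMod p) - c, (b : ZMod p) + c) := by
  simp [SS, E1, E2, Gg, Prod.ext_iff]
  ring

lemma SS_zero_iff (a b c : ℕ) : SS p a b c = 0 ↔ a = 0 ∧ b = 0 ∧ c = 0 := by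
  constructor
  · intro h
    have := congrArg card h
    rw [card_SS] at this
    simp at this
    omega
  · rintro ⟨rfl, rfl, rfl⟩
    simp [SS]

lemma mod_eq_zero_of_dvd {m n : ℕ} (h : m ∣ n) : n % m = 0 := by
  obtain ⟨k, rfl⟩ := h
  simp [Nat.mul_mod_right]

variable (hp : p.Prime)
include hp

lemma one_ne : (1 : ZMod p) ≠ 0 := by
  haveI := Fact.mk hp
  exact one_ne_zero

lemma ne12 : E1 p ≠ E2 p := fun h => one_ne hp (congrArg Prod.fst h)

lemma ne13 : E1 p ≠ Gg p := fun h => one_ne hp ((congrArg Prod.snd h).symm)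

lemma ne23 : E2 p ≠ Gg p :=
  fun h => one_ne hp (neg_eq_zero.mp (congrArg Prod.fst h).symm)

lemma E1_ne_zero : E1 p ≠ 0 := fun h => one_ne hp (congrArg Prod.fst h)

lemma E2_ne_zero : E2 p ≠ 0 := fun h => one_ne hp (congrArg Prod.snd h)

lemma Gg_ne_zero : Gg p ≠ 0 := fun h => one_ne hp (congrArg Prod.snd h)

lemma mem_G1_ne_zero {x : ZMod p × ZMod p} (hx : x ∈ G1set p) : x ≠ 0 := by
  rcases hx with h | h | h
  · exact h ▸ E1_ne_zero hp
  · exact h ▸ E2_ne_zero hp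
  · exact h ▸ Gg_ne_zero hp

lemma ord_eq {x : ZMod p × ZMod p} (hx : x ≠ 0) : addOrderOf x = p := by
  have hsm : p • x = 0 := by
    ext
    · simp [ZMod.natCast_self]
    · simp [ZMod.natCast_self]
  have hdvd : addOrderOf x ∣ p := addOrderOf_dvd_of_nsmul_eq_zero hsm
  rcases (Nat.Prime.eq_one_or_self_of_dvd hp _ hdvd) with h | h
  · exact absurd (AddMonoid.addOrderOf_eq_one_iff.mp h) hx
  · exact h

lemma count_SS1 (a b c : ℕ) : count (E1 p) (SS p a b c) = a := by
  rw [SS, count_add, count_add, count_replicate, count_replicate, count_replicate,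
    if_pos rfl, if_neg (Ne.symm (ne12 hp)), if_neg (Ne.symm (ne13 hp))]
  simp

lemma count_SS2 (a b c : ℕ) : count (E2 p) (SS p a b c) = b := by
  rw [SS, count_add, count_add, count_replicate, count_replicate, count_replicate,
    if_neg (ne12 hp), if_pos rfl, if_neg (Ne.symm (ne23 hp))]
  simp

lemma count_SS3 (a b c : ℕ) : count (Gg p) (SS p a b c) = c := by
  rw [SS, count_add, count_add, count_replicate, count_replicate, count_replicate,
    if_neg (ne13 hp), if_neg (ne23 hp), if_pos rfl]
  simp

lemma decomp {A : Multiset (ZMod p × ZMod p)} (hA : ∀ x ∈ A, x ∈ G1set p) :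
    A = SS p (count (E1 p) A) (count (E2 p) A) (count (Gg p) A) := by
  ext x
  by_cases h1 : x = E1 p
  · subst h1; rw [count_SS1 hp]
  · by_cases h2 : x = E2 p
    · subst h2; rw [count_SS2 hp]
    · by_cases h3 : x = Gg p
      · subst h3; rw [count_SS3 hp]
      · rw [count_eq_zero_of_notMem, count_eq_zero_of_notMem]
        · intro hx
          rcases mem_SS hx with h | h | h <;> tauto
        · intro hx
          rcases hA x hx with h | h | h <;> tauto

lemma sum_SS_zero (a b c : ℕ) :
    (SS p a b c).sum = 0 ↔ a % p = c % p ∧ (b + c) % p = 0 := by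
  haveI : NeZero p := ⟨hp.ne_zero⟩
  rw [sum_SS, Prod.ext_iff]
  constructor
  · rintro ⟨h1, h2⟩
    constructor
    · rw [← ZMod.natCast_eq_natCast_iff']
      exact sub_eq_zero.mp h1
    · have : ((b + c : ℕ) : ZMod p) = 0 := by push_cast; exact h2
      rw [ZMod.natCast_eq_zero_iff] at this
      exact mod_eq_zero_of_dvd this
  · rintro ⟨h1, h2⟩
    have hc1 : ((a : ZMod p)) = (c : ZMod p) := (ZMod.natCast_eq_natCast_iff' _ _ _).mpr h1
    have hc2 : ((b + c : ℕ) : ZMod p) = 0 :=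
      (ZMod.natCast_eq_zero_iff _ _).mpr (Nat.dvd_of_mod_eq_zero h2)
    push_cast at hc2
    exact ⟨sub_eq_zero.mpr hc1, hc2⟩

lemma dvd_small {n : ℕ} (hd : p ∣ n) (hlt : n < 2 * p) :
    n = 0 ∨ n = p := by
  rcases Nat.eq_zero_or_pos n with h | h
  · exact Or.inl h
  · right
    have hle := Nat.le_of_dvd h hd
    have h2 : p ∣ n - p := Nat.dvd_sub hd dvd_rfl
    have := Nat.eq_zero_of_dvd_of_lt h2 (by omega)
    omega

/-- Minimality of `x^p` for `x ∈ G1`. -/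
lemma min_rep {x : ZMod p × ZMod p} (hx : x ∈ G1set p) :
    IsMinZeroSum (G1set p) (replicate p x) := by
  have hxo : addOrderOf x = p := ord_eq hp (mem_G1_ne_zero hp hx)
  refine ⟨?_, ⟨?_, ?_⟩, ?_⟩
  · intro h
    have := congrArg card h
    simp at this
    exact hp.ne_zero this
  · intro y hy
    rw [eq_of_mem_replicate hy]; exact hx
  · rw [sum_replicate]
    ext
    · simp [ZMod.natCast_self]
    · simp [ZMod.natCast_self]
  · intro T hT hT0 hTne hTsum
    have hTall : ∀ y ∈ T, y = x := fun y hy => eq_of_mem_replicate (mem_of_le hT hy)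
    have hTr : T = replicate (card T) x := eq_replicate_card.mpr hTall
    have hcard : card T ≤ p := by
      have := card_le_card hT
      simpa using this
    have hdvd : p ∣ card T := by
      have h0 : (card T) • x = 0 := by
        rw [← sum_replicate, ← hTr, hTsum]
      have := addOrderOf_dvd_of_nsmul_eq_zero h0
      rwa [hxo] at this
    have hne0 : card T ≠ 0 := by
      simpa [Multiset.card_eq_zero] using hT0
    have : card T = p := le_antisymm hcard (Nat.le_of_dvd (Nat.pos_of_ne_zero hne0) hdvd)
    exact hTne (by rw [hTr, this])

/-- Minimality of `e1^j g^j e2^(p-j)`. -/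
lemma min_Aj {j : ℕ} (h1 : 1 ≤ j) (h2 : j ≤ p - 1) :
    IsMinZeroSum (G1set p) (SS p j (p - j) j) := by
  have hp2 := hp.two_le
  have hjp : j < p := by omega
  refine ⟨?_, ⟨fun x hx => mem_SS hx, ?_⟩, ?_⟩
  · rw [Ne, SS_zero_iff]; omega
  · rw [sum_SS_zero hp]
    constructor
    · rfl
    · have : p - j + j = p := by omega
      rw [this, Nat.mod_self]
  · intro T hT hT0 hTne hTsum
    have hmem : ∀ x ∈ T, x ∈ G1set p := fun x hx => mem_SS (mem_of_le hT hx)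
    set a' := count (E1 p) T with ha'
    set b' := count (E2 p) T with hb'
    set c' := count (Gg p) T with hc'
    have hdT : T = SS p a' b' c' := decomp hp hmem
    have hale : a' ≤ j := by
      have := count_le_of_le (E1 p) hT
      rwa [count_SS1 hp] at this
    have hble : b' ≤ p - j := by
      have := count_le_of_le (E2 p) hT
      rwa [count_SS2 hp] at this
    have hcle : c' ≤ j := by
      have := count_le_of_le (Gg p) hT
      rwa [count_SS3 hp] at this
    rw [hdT, sum_SS_zero hp] at hTsum
    obtain ⟨hm1, hm2⟩ := hTsum
    have hac : a' = c' := by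
      rwa [Nat.mod_eq_of_lt (by omega), Nat.mod_eq_of_lt (by omega)] at hm1
    have hbc : b' + c' = 0 ∨ b' + c' = p :=
      dvd_small hp (Nat.dvd_of_mod_eq_zero hm2) (by omega)
    rcases hbc with h | h
    · apply hT0
      rw [hdT, SS_zero_iff]
      omega
    · apply hTne
      rw [hdT]
      have hb2 : b' = p - j := by omega
      have hc2 : c' = j := by omega
      rw [hb2, hc2, hac, hc2]

/-- The characterization of minimal zero-sum sequences over `G1`. -/
lemma char (A : Multiset (ZMod p × ZMod p)) :
    IsMinZeroSum (G1set p) A ↔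
      ((∃ j : ℕ, 1 ≤ j ∧ j ≤ p - 1 ∧ A = SS p j (p - j) j) ∨
        A = replicate p (E1 p) ∨ A = replicate p (E2 p) ∨ A = replicate p (Gg p)) := by
  have hp2 := hp.two_le
  constructor
  · rintro ⟨hA0, ⟨hmem, hsum⟩, hmin⟩
    set a := count (E1 p) A with ha
    set b := count (E2 p) A with hb
    set c := count (Gg p) A with hc
    have hdA : A = SS p a b c := decomp hp hmem
    rw [hdA, sum_SS_zero hp] at hsum
    obtain ⟨hm1, hm2⟩ := hsum
    have habc : ¬(a = 0 ∧ b = 0 ∧ c = 0) := by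
      intro h
      exact hA0 (by rw [hdA, SS_zero_iff]; exact h)
    have key : ∀ T : Multiset (ZMod p × ZMod p), T ≤ A → T ≠ 0 → T.sum = 0 → A = T := by
      intro T hle h0 hs
      by_contra hne
      exact hmin T hle h0 (fun h => hne h.symm) hs
    set j := c % p with hj
    have hjlt : j < p := Nat.mod_lt _ hp.pos
    by_cases hj0 : j = 0
    · have hdc : p ∣ c := Nat.dvd_of_mod_eq_zero hj0
      have hda : p ∣ a := Nat.dvd_of_mod_eq_zero (by omega)
      have hdb : p ∣ b := by
        have h' := Nat.dvd_of_mod_eq_zero hm2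
        exact (Nat.dvd_add_right hdc).mp (by rwa [Nat.add_comm] at h')
      by_cases hA : a ≠ 0
      · have hap : p ≤ a := Nat.le_of_dvd (Nat.pos_of_ne_zero hA) hda
        have hTle : SS p p 0 0 ≤ SS p a b c := le_SS hap (Nat.zero_le _) (Nat.zero_le _)
        have hkey := key (SS p p 0 0) (hdA ▸ hTle)
          (by rw [Ne, SS_zero_iff]; omega)
          (by rw [sum_SS_zero hp]; simp)
        refine Or.inr (Or.inl ?_)
        rw [hkey]
        simp [SS]
      · push_neg at hA
        by_cases hC : c ≠ 0
        · have hcp : p ≤ c := Nat.le_of_dvd (Nat.pos_of_ne_zero hC) hdc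
          have hTle : SS p 0 0 p ≤ SS p a b c := le_SS (Nat.zero_le _) (Nat.zero_le _) hcp
          have hkey := key (SS p 0 0 p) (hdA ▸ hTle)
            (by rw [Ne, SS_zero_iff]; omega)
            (by rw [sum_SS_zero hp]; simp)
          refine Or.inr (Or.inr (Or.inr ?_))
          rw [hkey]
          simp [SS]
        · push_neg at hC
          have hB : b ≠ 0 := by tauto
          have hbp : p ≤ b := Nat.le_of_dvd (Nat.pos_of_ne_zero hB) hdb
          have hTle : SS p 0 p 0 ≤ SS p a b c := le_SS (Nat.zero_le _) hbp (Nat.zero_le _)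
          have hkey := key (SS p 0 p 0) (hdA ▸ hTle)
            (by rw [Ne, SS_zero_iff]; omega)
            (by rw [sum_SS_zero hp]; simp)
          refine Or.inr (Or.inr (Or.inl ?_))
          rw [hkey]
          simp [SS]
    · have hj1 : 1 ≤ j := Nat.pos_of_ne_zero hj0
      have haj : j ≤ a := by
        have h' : a % p = j := by omega
        calc j = a % p := h'.symm
          _ ≤ a := Nat.mod_le a p
      have hcj : j ≤ c := by
        calc j = c % p := hj
          _ ≤ c := Nat.mod_le c p
      have hbj : p - j ≤ b := by
        have hBp : b % p < p := Nat.mod_lt _ hp.pos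
        have hmod : (b % p + j) % p = 0 := by
          rw [hj, ← Nat.add_mod, ← hm2]
        have hdvd : p ∣ b % p + j := Nat.dvd_of_mod_eq_zero hmod
        rcases dvd_small hp hdvd (by omega) with h | h
        · omega
        · have h' : b % p = p - j := by omega
          calc p - j = b % p := h'.symm
            _ ≤ b := Nat.mod_le b p
      have hTle : SS p j (p - j) j ≤ SS p a b c := le_SS haj hbj hcj
      have hkey := key (SS p j (p - j) j) (hdA ▸ hTle)
        (by rw [Ne, SS_zero_iff]; omega)
        (by
          rw [sum_SS_zero hp]
          refine ⟨rfl, ?_⟩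
          have h' : p - j + j = p := by omega
          rw [h', Nat.mod_self])
      exact Or.inl ⟨j, hj1, by omega, hkey⟩
  · rintro (⟨j, h1, h2, rfl⟩ | rfl | rfl | rfl)
    · exact min_Aj hp h1 h2
    · exact min_rep hp (Or.inl rfl)
    · exact min_rep hp (Or.inr (Or.inl rfl))
    · exact min_rep hp (Or.inr (Or.inr rfl))

lemma cross_of {A : Multiset (ZMod p × ZMod p)} (hA : ∀ x ∈ A, x ∈ G1set p) :
    crossNum A = (card A : ℚ) / p := by
  unfold crossNum
  have hmap : A.map (fun g => (1 : ℚ) / (addOrderOf g : ℚ)) =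
      A.map (fun _ => (1 : ℚ) / p) := by
    apply map_congr rfl
    intro x hx
    rw [ord_eq hp (mem_G1_ne_zero hp (hA x hx))]
  rw [hmap, map_const', sum_replicate, nsmul_eq_mul, mul_one_div]

end Stmt7Aux

/-- For `G = C_p ⊕ C_p` with independent generators `e1, e2` and
`G1 = {e1, e2, -e1+e2}`, the minimal zero-sum sequences over `G1` are exactly
`e1^j (-e1+e2)^j e2^(p-j)` for `j ∈ [1,p-1]` together with `e1^p, e2^p,
(-e1+e2)^p`; consequently the set of their cross numbers is
`{j/p : j ∈ [p, 2p-1]}`. -/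
theorem stmt_7 (p : ℕ) (hp : p.Prime) :
    let e1 : ZMod p × ZMod p := (1, 0)
    let e2 : ZMod p × ZMod p := (0, 1)
    let g : ZMod p × ZMod p := -e1 + e2
    let G1 : Set (ZMod p × ZMod p) := {e1, e2, g}
    ({ A : Multiset (ZMod p × ZMod p) | IsMinZeroSum G1 A } =
      { A | (∃ j : ℕ, 1 ≤ j ∧ j ≤ p - 1 ∧
              A = replicate j e1 + replicate j g + replicate (p - j) e2) ∨
            A = replicate p e1 ∨ A = replicate p e2 ∨ A = replicate p g }) ∧
    ({ q : ℚ | ∃ A : Multiset (ZMod p × ZMod p),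
        IsMinZeroSum G1 A ∧ crossNum A = q } =
      { q : ℚ | ∃ j : ℕ, p ≤ j ∧ j ≤ 2 * p - 1 ∧ q = (j : ℚ) / (p : ℚ) }) := by
  intro e1 e2 g G1
  have hp2 := hp.two_le
  have he1 : e1 = Stmt7Aux.E1 p := rfl
  have he2 : e2 = Stmt7Aux.E2 p := rfl
  have hg : g = Stmt7Aux.Gg p := by
    show -((1:ZMod p), (0:ZMod p)) + ((0:ZMod p), (1:ZMod p)) = Stmt7Aux.Gg p
    simp [Stmt7Aux.Gg, Prod.ext_iff]
  have hG1 : G1 = Stmt7Aux.G1set p := by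
    show ({e1, e2, g} : Set (ZMod p × ZMod p)) = _
    rw [he1, he2, hg]
    rfl
  have hSS : ∀ a b c : ℕ, Stmt7Aux.SS p a b c
      = replicate a (Stmt7Aux.E1 p) + replicate c (Stmt7Aux.Gg p)
        + replicate b (Stmt7Aux.E2 p) := fun a b c => add_right_comm _ _ _
  rw [hG1, he1, he2, hg]
  constructor
  · ext A
    simp only [Set.mem_setOf_eq]
    rw [Stmt7Aux.char hp A]
    simp only [hSS]
  · ext q
    simp only [Set.mem_setOf_eq]
    constructor
    · rintro ⟨A, hmin, rfl⟩
      rcases (Stmt7Aux.char hp A).mp hmin with ⟨j, h1, h2, rfl⟩ | rfl | rfl | rfl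
      · refine ⟨p + j, by omega, by omega, ?_⟩
        rw [Stmt7Aux.cross_of hp (fun x hx => Stmt7Aux.mem_SS hx), Stmt7Aux.card_SS]
        congr 2
        omega
      · refine ⟨p, le_rfl, by omega, ?_⟩
        rw [Stmt7Aux.cross_of hp
          (fun x hx => (eq_of_mem_replicate hx) ▸ Or.inl rfl)]
        simp
      · refine ⟨p, le_rfl, by omega, ?_⟩
        rw [Stmt7Aux.cross_of hp
          (fun x hx => (eq_of_mem_replicate hx) ▸ Or.inr (Or.inl rfl))]
        simp
      · refine ⟨p, le_rfl, by omega, ?_⟩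
        rw [Stmt7Aux.cross_of hp
          (fun x hx => (eq_of_mem_replicate hx) ▸ Or.inr (Or.inr rfl))]
        simp
    · rintro ⟨j, h1, h2, rfl⟩
      by_cases hjp : j = p
      · refine ⟨replicate p (Stmt7Aux.E1 p), Stmt7Aux.min_rep hp (Or.inl rfl), ?_⟩
        rw [Stmt7Aux.cross_of hp
          (fun x hx => (eq_of_mem_replicate hx) ▸ Or.inl rfl)]
        simp [hjp]
      · set i := j - p with hi
        have hi1 : 1 ≤ i := by omega
        have hi2 : i ≤ p - 1 := by omega
        refine ⟨Stmt7Aux.SS p i (p - i) i, Stmt7Aux.min_Aj hp hi1 hi2, ?_⟩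
        rw [Stmt7Aux.cross_of hp (fun x hx => Stmt7Aux.mem_SS hx), Stmt7Aux.card_SS]
        congr 2
        omega
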